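/- Let P be a finite poset. The map OR : C(P) → OR(P) defined by (OR(g))(x) = max{ g(y_1) + g(y_2) + ⋯ + g(y_k) | x = y_1 ⋖ y_2 ⋖ ⋯ ⋖ y_k with y_k maximal in P } is a bijection from the chain polytope to the order-reversing polytope, with inverse given by (OR^{-1}(f))(x) = f(x) − max{ f(y) | y ⋗ x in P̂ }, where f(M̂) = 0 for the adjoined maximal element M̂. Likewise, OP : C(P) → OP(P) defined by (OP(g))(x) = max{ g(y_1) + ⋯ + g(y_k) | y_1 ⋖ ⋯ ⋖ y_k = x with y_1 minimal in P } is a bijection with inverse (OP^{-1}(f))(x) = f(x) − max{ f(y) | y ⋖ x in P̂ }, where f(m̂) = 0 for the adjoined minimal element m̂. -/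

import Mathlib

open scoped Classical

variable {P : Type*} [PartialOrder P]

/-- Membership in the chain polytope `C(P)`: nonnegative labels whose sum along every
chain is at most 1. -/
def InChainPolytope (P : Type*) [PartialOrder P] (g : P → ℝ) : Prop :=
  (∀ x : P, 0 ≤ g x) ∧ ∀ l : List P, l.Chain' (· < ·) → (l.map g).sum ≤ 1

/-- Membership in the order-reversing polytope `OR(P)`. -/
def InORPolytope (P : Type*) [PartialOrder P] (f : P → ℝ) : Prop :=
  (∀ x : P, 0 ≤ f x ∧ f x ≤ 1) ∧ ∀ ⦃x y : P⦄, x ≤ y → f y ≤ f x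

/-- Membership in the order-preserving polytope `OP(P)`. -/
def InOPPolytope (P : Type*) [PartialOrder P] (f : P → ℝ) : Prop :=
  (∀ x : P, 0 ≤ f x ∧ f x ≤ 1) ∧ ∀ ⦃x y : P⦄, x ≤ y → f x ≤ f y

/-- The poset `P̂`, obtained from `P` by adjoining a minimum `m̂ = ⊥` and a
maximum `M̂ = ⊤`. -/
abbrev PHat (P : Type*) := WithBot (WithTop P)

/-- The inclusion of `P` into `P̂`. -/
def toHat (x : P) : PHat P := ((x : WithTop P) : PHat P)

/-- Extension of an order-reversing labeling to `P̂`, with `f(m̂) = 1`, `f(M̂) = 0`. -/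
noncomputable def hatOR (f : P → ℝ) : PHat P → ℝ := fun y =>
  WithBot.recBotCoe 1 (fun w => WithTop.recTopCoe 0 f w) y

/-- Extension of an order-preserving labeling to `P̂`, with `f(m̂) = 0`, `f(M̂) = 1`. -/
noncomputable def hatOP (f : P → ℝ) : PHat P → ℝ := fun y =>
  WithBot.recBotCoe 0 (fun w => WithTop.recTopCoe 1 f w) y

/-- The saturated chains `x = y_1 ⋖ y_2 ⋖ ⋯ ⋖ y_k` from `x` up to a maximal element. -/
def maxChainsFrom (x : P) : Set (List P) :=
  {l | l.Chain' (· ⋖ ·) ∧ l.head? = some x ∧ ∃ z, l.getLast? = some z ∧ IsMax z}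

/-- The saturated chains `y_1 ⋖ ⋯ ⋖ y_k = x` from a minimal element up to `x`. -/
def maxChainsTo (x : P) : Set (List P) :=
  {l | l.Chain' (· ⋖ ·) ∧ (∃ a, l.head? = some a ∧ IsMin a) ∧ l.getLast? = some x}

/-- The maximal chains of `P` containing `e`. -/
def maxChainsThru (e : P) : Set (List P) :=
  {l | l.Chain' (· ⋖ ·) ∧ (∃ a, l.head? = some a ∧ IsMin a) ∧
    (∃ z, l.getLast? = some z ∧ IsMax z) ∧ e ∈ l}

/-- The transfer map `OR : C(P) → OR(P)`:
`(OR g)(x) = max{ g(y_1) + ⋯ + g(y_k) | x = y_1 ⋖ ⋯ ⋖ y_k, y_k maximal }`. -/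
noncomputable def ORmap (g : P → ℝ) (x : P) : ℝ :=
  sSup ((fun l => (l.map g).sum) '' maxChainsFrom x)

/-- The transfer map `OP : C(P) → OP(P)`:
`(OP g)(x) = max{ g(y_1) + ⋯ + g(y_k) | y_1 ⋖ ⋯ ⋖ y_k = x, y_1 minimal }`. -/
noncomputable def OPmap (g : P → ℝ) (x : P) : ℝ :=
  sSup ((fun l => (l.map g).sum) '' maxChainsTo x)

/-- The inverse transfer map: `(OR⁻¹ f)(x) = f(x) - max{ f(y) | y ⋗ x in P̂ }`. -/
noncomputable def ORinv (f : P → ℝ) (x : P) : ℝ :=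
  f x - sSup {v : ℝ | ∃ y : PHat P, toHat x ⋖ y ∧ v = hatOR f y}

/-- The inverse transfer map: `(OP⁻¹ f)(x) = f(x) - max{ f(y) | y ⋖ x in P̂ }`. -/
noncomputable def OPinv (f : P → ℝ) (x : P) : ℝ :=
  f x - sSup {v : ℝ | ∃ y : PHat P, y ⋖ toHat x ∧ v = hatOP f y}

/-- The piecewise-linear order ideal toggle on the order-reversing polytope:
the label of `e` is replaced by
`max{f(y) | y ⋗ e in P̂} + min{f(y) | y ⋖ e in P̂} - f(e)`. -/
noncomputable def tPL (e : P) (f : P → ℝ) : P → ℝ :=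
  Function.update f e
    (sSup {v : ℝ | ∃ y : PHat P, toHat e ⋖ y ∧ v = hatOR f y}
      + sInf {v : ℝ | ∃ y : PHat P, y ⋖ toHat e ∧ v = hatOR f y} - f e)

/-- The piecewise-linear antichain (chain polytope) toggle: the label of `e` is replaced
by `1 - max{ Σ g(y_i) | (y_1,…,y_k) a maximal chain of P containing e }`. -/
noncomputable def tauPL (e : P) (g : P → ℝ) : P → ℝ :=
  Function.update g e (1 - sSup ((fun l => (l.map g).sum) '' maxChainsThru e))

/-- The indicator function of a subset. -/
noncomputable def ind (S : Set P) : P → ℝ := fun x => if x ∈ S then 1 else 0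

def listComp {α : Type*} (fs : List (α → α)) : α → α := fs.foldr (· ∘ ·) id

section SupHelpers

lemma csSup_add_const (a : ℝ) {S : Set ℝ} (hne : S.Nonempty) (hfin : S.Finite) :
    sSup ((fun v => a + v) '' S) = a + sSup S := by
  apply le_antisymm
  · apply csSup_le (hne.image _)
    rintro _ ⟨v, hv, rfl⟩
    have := le_csSup hfin.bddAbove hv
    show a + v ≤ a + sSup S
    linarith
  · have h1 : sSup S ≤ sSup ((fun v => a + v) '' S) - a := by
      apply csSup_le hne
      intro v hv
      have : a + v ≤ sSup ((fun v => a + v) '' S) :=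
        le_csSup (hfin.image _).bddAbove (Set.mem_image_of_mem _ hv)
      linarith
    linarith

lemma csSup_biUnion' {ι : Type*} {C : Set ι} (hC : C.Nonempty) (hCfin : C.Finite)
    (T : ι → Set ℝ) (hfin : (⋃ y ∈ C, T y).Finite) (hTne : ∀ y ∈ C, (T y).Nonempty) :
    sSup (⋃ y ∈ C, T y) = sSup ((fun y => sSup (T y)) '' C) := by
  have hTfin : ∀ y ∈ C, (T y).Finite := fun y hy =>
    hfin.subset (Set.subset_biUnion_of_mem hy)
  apply le_antisymm
  · obtain ⟨y0, hy0⟩ := hC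
    apply csSup_le ⟨_, Set.mem_biUnion hy0 (hTne y0 hy0).choose_spec⟩
    intro v hv
    obtain ⟨y, hy, hvT⟩ := Set.mem_iUnion₂.mp hv
    calc v ≤ sSup (T y) := le_csSup (hTfin y hy).bddAbove hvT
      _ ≤ _ := le_csSup ((hCfin.image _).bddAbove) (Set.mem_image_of_mem _ hy)
  · apply csSup_le (hC.image _)
    rintro _ ⟨y, hy, rfl⟩
    apply csSup_le (hTne y hy)
    intro v hv
    exact le_csSup hfin.bddAbove (Set.mem_biUnion hy hv)

end SupHelpers

section CoverSets

lemma isMin_coe_withTop {x : P} : IsMin (x : WithTop P) ↔ IsMin x := by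
  constructor
  · intro h b hb
    have : (b : WithTop P) ≤ x := WithTop.coe_le_coe.mpr hb
    exact WithTop.coe_le_coe.mp (h this)
  · intro h b hb
    induction b using WithTop.recTopCoe with
    | top => exact absurd hb (by simp)
    | coe c => exact WithTop.coe_le_coe.mpr (h (WithTop.coe_le_coe.mp hb))

lemma upSet_eq (f : P → ℝ) (x : P) :
    {v : ℝ | ∃ y : PHat P, toHat x ⋖ y ∧ v = hatOR f y}
      = if IsMax x then {(0 : ℝ)} else f '' {y | x ⋖ y} := by
  ext v
  simp only [Set.mem_setOf_eq]
  constructor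
  · rintro ⟨y, hc, rfl⟩
    induction y using WithBot.recBotCoe with
    | bot => exact absurd hc.lt (by simp [toHat])
    | coe w =>
      rw [show toHat x = ((x : WithTop P) : PHat P) from rfl,
        WithBot.coe_covBy_coe] at hc
      induction w using WithTop.recTopCoe with
      | top =>
        rw [WithTop.coe_covBy_top] at hc
        simp only [hc, if_true]
        exact Set.mem_singleton_iff.mpr rfl
      | coe y =>
        rw [WithTop.coe_covBy_coe] at hc
        have hnx : ¬ IsMax x := fun h => hc.lt.not_ge (h hc.le)
        simp only [hnx, if_false]
        exact ⟨y, hc, rfl⟩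
  · intro hv
    split_ifs at hv with hx
    · refine ⟨((⊤ : WithTop P) : PHat P), ?_, ?_⟩
      · exact WithBot.coe_covBy_coe.mpr (WithTop.coe_covBy_top.mpr hx)
      · rw [Set.mem_singleton_iff.mp hv]; rfl
    · obtain ⟨y, hxy, rfl⟩ := hv
      exact ⟨toHat y, WithBot.coe_covBy_coe.mpr (WithTop.coe_covBy_coe.mpr hxy), rfl⟩

lemma downSet_eq (f : P → ℝ) (x : P) :
    {v : ℝ | ∃ y : PHat P, y ⋖ toHat x ∧ v = hatOP f y}
      = if IsMin x then {(0 : ℝ)} else f '' {y | y ⋖ x} := by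
  ext v
  simp only [Set.mem_setOf_eq]
  constructor
  · rintro ⟨y, hc, rfl⟩
    induction y using WithBot.recBotCoe with
    | bot =>
      have hx : IsMin x := by
        have := WithBot.bot_covBy_coe.mp hc
        exact isMin_coe_withTop.mp this
      simp only [hx, if_true]
      exact Set.mem_singleton_iff.mpr rfl
    | coe w =>
      rw [show toHat x = ((x : WithTop P) : PHat P) from rfl,
        WithBot.coe_covBy_coe] at hc
      induction w using WithTop.recTopCoe with
      | top => exact absurd hc.lt (by simp)
      | coe y =>
        rw [WithTop.coe_covBy_coe] at hc
        have hnx : ¬ IsMin x := fun h => hc.lt.not_ge (h hc.le)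
        simp only [hnx, if_false]
        exact ⟨y, hc, rfl⟩
  · intro hv
    split_ifs at hv with hx
    · refine ⟨(⊥ : PHat P), ?_, ?_⟩
      · exact WithBot.bot_covBy_coe.mpr (isMin_coe_withTop.mpr hx)
      · rw [Set.mem_singleton_iff.mp hv]; rfl
    · obtain ⟨y, hxy, rfl⟩ := hv
      exact ⟨toHat y, WithBot.coe_covBy_coe.mpr (WithTop.coe_covBy_coe.mpr hxy), rfl⟩

end CoverSets

section Chains
variable [Fintype P]

lemma covChains_finite : {l : List P | l.Chain' (· ⋖ ·)}.Finite := by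
  apply (List.finite_length_le P (Fintype.card P)).subset
  intro l hl
  have h1 : l.Chain' (· < ·) := hl.imp fun a b h => h.lt
  have h2 : l.Pairwise (· < ·) := List.isChain_iff_pairwise.mp h1
  have h3 : l.Nodup := h2.imp ne_of_lt
  exact h3.length_le_card

lemma maxChainsFrom_finite (x : P) : (maxChainsFrom x).Finite :=
  covChains_finite.subset fun l hl => hl.1

lemma sums_finite (g : P → ℝ) (x : P) :
    ((fun l => (l.map g).sum) '' maxChainsFrom x).Finite :=
  (maxChainsFrom_finite x).image _

lemma maxChainsFrom_nonempty (x : P) : (maxChainsFrom x).Nonempty := by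
  refine WellFounded.induction (C := fun x : P => (maxChainsFrom x).Nonempty)
    (wellFounded_gt (α := P)) x ?_
  intro x IH
  by_cases hx : IsMax x
  · exact ⟨[x], List.isChain_singleton x, rfl, x, rfl, hx⟩
  · obtain ⟨y, hxy⟩ := exists_covBy_of_wellFoundedLT hx
    obtain ⟨l, hc, hh, z, hz, hzm⟩ := IH y hxy.lt
    cases l with
    | nil => simp at hh
    | cons a t =>
      obtain rfl : y = a := (by simpa using hh : a = y).symm
      refine ⟨x :: y :: t, ?_, rfl, z, ?_, hzm⟩
      · rw [List.Chain', List.isChain_cons_cons]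
        exact ⟨hxy, hc⟩
      · rwa [List.getLast?_cons_cons]

lemma mem_maxChainsFrom_iff {x : P} (hx : ¬ IsMax x) {l : List P} :
    l ∈ maxChainsFrom x ↔ ∃ y t, x ⋖ y ∧ t ∈ maxChainsFrom y ∧ l = x :: t := by
  constructor
  · rintro ⟨hc, hh, z, hz, hzm⟩
    cases l with
    | nil => simp at hh
    | cons a t =>
      obtain rfl : x = a := (by simpa using hh : a = x).symm
      cases t with
      | nil =>
        obtain rfl : z = x := by simpa using hz.symm
        exact absurd hzm hx
      | cons y t' =>
        rw [List.Chain', List.isChain_cons_cons] at hc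
        rw [List.getLast?_cons_cons] at hz
        exact ⟨y, y :: t', hc.1, ⟨hc.2, rfl, z, hz, hzm⟩, rfl⟩
  · rintro ⟨y, t, hxy, ⟨hc, hh, z, hz, hzm⟩, rfl⟩
    cases t with
    | nil => simp at hh
    | cons a t' =>
      obtain rfl : y = a := (by simpa using hh : a = y).symm
      refine ⟨?_, rfl, z, ?_, hzm⟩
      · rw [List.Chain', List.isChain_cons_cons]; exact ⟨hxy, hc⟩
      · rwa [List.getLast?_cons_cons]

lemma ORmap_max {g : P → ℝ} {x : P} (hx : IsMax x) : ORmap g x = g x := by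
  have : maxChainsFrom x = {[x]} := by
    ext l
    constructor
    · rintro ⟨hc, hh, z, hz, hzm⟩
      cases l with
      | nil => simp at hh
      | cons a t =>
        obtain rfl : x = a := (by simpa using hh : a = x).symm
        cases t with
        | nil => rfl
        | cons y t' =>
          rw [List.Chain', List.isChain_cons_cons] at hc
          exact absurd (hc.1.lt.trans_le (hx hc.1.le)) (lt_irrefl _)
    · rintro rfl
      exact ⟨List.isChain_singleton x, rfl, x, rfl, hx⟩
  rw [ORmap, this, Set.image_singleton]
  simp

lemma ORmap_rec (g : P → ℝ) {x : P} (hx : ¬ IsMax x) :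
    ORmap g x = g x + sSup (ORmap g '' {y | x ⋖ y}) := by
  have hC : {y : P | x ⋖ y}.Nonempty := exists_covBy_of_wellFoundedLT hx
  have himg : (fun l => (l.map g).sum) '' maxChainsFrom x
      = (fun v => g x + v) ''
        (⋃ y ∈ {y : P | x ⋖ y}, (fun l => (l.map g).sum) '' maxChainsFrom y) := by
    ext v
    constructor
    · rintro ⟨l, hl, rfl⟩
      obtain ⟨y, t, hxy, ht, rfl⟩ := (mem_maxChainsFrom_iff hx).mp hl
      exact ⟨(t.map g).sum, Set.mem_biUnion hxy (Set.mem_image_of_mem _ ht), by simp⟩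
    · rintro ⟨w, hw, rfl⟩
      obtain ⟨y, hxy, t, ht, rfl⟩ := by
        simpa only [Set.mem_iUnion, Set.mem_image, exists_prop] using hw
      exact ⟨x :: t, (mem_maxChainsFrom_iff hx).mpr ⟨y, t, hxy, ht, rfl⟩, by simp⟩
  rw [ORmap, himg, csSup_add_const, csSup_biUnion' hC (Set.toFinite _)]
  · rfl
  · exact Set.Finite.biUnion (Set.toFinite _) fun y _ => sums_finite g y
  · exact fun y _ => (maxChainsFrom_nonempty y).image _
  · obtain ⟨y0, hy0⟩ := hC
    exact ⟨_, Set.mem_biUnion hy0 (Set.mem_image_of_mem _ (maxChainsFrom_nonempty y0).choose_spec)⟩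
  · exact Set.Finite.biUnion (Set.toFinite _) fun y _ => sums_finite g y

end Chains

section ORside
variable [Fintype P]

lemma ORmap_nonneg {g : P → ℝ} (hg : InChainPolytope P g) (x : P) : 0 ≤ ORmap g x := by
  obtain ⟨l, hl⟩ := maxChainsFrom_nonempty x
  have h0 : (0 : ℝ) ≤ (l.map g).sum :=
    List.sum_nonneg fun v hv => by
      obtain ⟨a, _, rfl⟩ := List.mem_map.mp hv; exact hg.1 a
  exact h0.trans (le_csSup (sums_finite g x).bddAbove (Set.mem_image_of_mem _ hl))

lemma ORmap_le_one {g : P → ℝ} (hg : InChainPolytope P g) (x : P) : ORmap g x ≤ 1 := by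
  apply csSup_le ((maxChainsFrom_nonempty x).image _)
  rintro _ ⟨l, hl, rfl⟩
  exact hg.2 l (hl.1.imp fun a b h => h.lt)

lemma ORmap_covBy_le {g : P → ℝ} (hg : InChainPolytope P g) {x y : P} (hxy : x ⋖ y) :
    ORmap g y ≤ ORmap g x := by
  have hx : ¬ IsMax x := fun h => hxy.lt.not_ge (h hxy.le)
  rw [ORmap_rec g hx]
  have h1 : ORmap g y ≤ sSup (ORmap g '' {y | x ⋖ y}) :=
    le_csSup ((Set.toFinite {y : P | x ⋖ y}).image _).bddAbove (Set.mem_image_of_mem _ hxy)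
  have h2 := hg.1 x
  linarith

lemma ORmap_anti {g : P → ℝ} (hg : InChainPolytope P g) :
    ∀ ⦃x y : P⦄, x ≤ y → ORmap g y ≤ ORmap g x := by
  intro x
  refine WellFounded.induction
    (C := fun x : P => ∀ y : P, x ≤ y → ORmap g y ≤ ORmap g x)
    (wellFounded_gt (α := P)) x ?_
  intro x IH y hxy
  rcases eq_or_lt_of_le hxy with rfl | hlt
  · exact le_refl _
  · obtain ⟨w, hxw, hwy⟩ := exists_covBy_le_of_lt hlt
    exact (IH w hxw.lt y hwy).trans (ORmap_covBy_le hg hxw)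

lemma Mup_max {f : P → ℝ} {x : P} (hx : IsMax x) :
    sSup {v : ℝ | ∃ y : PHat P, toHat x ⋖ y ∧ v = hatOR f y} = 0 := by
  rw [upSet_eq, if_pos hx, csSup_singleton]

lemma Mup_not_max {f : P → ℝ} {x : P} (hx : ¬ IsMax x) :
    sSup {v : ℝ | ∃ y : PHat P, toHat x ⋖ y ∧ v = hatOR f y}
      = sSup (f '' {y | x ⋖ y}) := by
  rw [upSet_eq, if_neg hx]

lemma ORinv_ORmap {g : P → ℝ} (_hg : InChainPolytope P g) : ORinv (ORmap g) = g := by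
  funext x
  rw [ORinv]
  by_cases hx : IsMax x
  · rw [Mup_max hx, ORmap_max hx]; ring
  · rw [Mup_not_max hx, ORmap_rec g hx]; ring

lemma ORmap_ORinv {f : P → ℝ} (hf : InORPolytope P f) : ORmap (ORinv f) = f := by
  funext x
  refine WellFounded.induction (C := fun x : P => ORmap (ORinv f) x = f x)
    (wellFounded_gt (α := P)) x ?_
  intro x IH
  by_cases hx : IsMax x
  · rw [ORmap_max hx, ORinv, Mup_max hx]; ring
  · rw [ORmap_rec _ hx, ORinv, Mup_not_max hx]
    have himg : ORmap (ORinv f) '' {y | x ⋖ y} = f '' {y | x ⋖ y} := by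
      apply Set.image_congr
      intro y hy
      exact IH y hy.lt
    rw [himg]; ring

-- Mup bounds
lemma Mup_nonneg {f : P → ℝ} (hf : InORPolytope P f) (x : P) :
    0 ≤ sSup {v : ℝ | ∃ y : PHat P, toHat x ⋖ y ∧ v = hatOR f y} := by
  by_cases hx : IsMax x
  · rw [Mup_max hx]
  · rw [Mup_not_max hx]
    obtain ⟨y0, hy0⟩ := exists_covBy_of_wellFoundedLT hx
    exact (hf.1 y0).1.trans
      (le_csSup ((Set.toFinite {y : P | x ⋖ y}).image _).bddAbove (Set.mem_image_of_mem _ hy0))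

lemma Mup_le_self {f : P → ℝ} (hf : InORPolytope P f) (x : P) :
    sSup {v : ℝ | ∃ y : PHat P, toHat x ⋖ y ∧ v = hatOR f y} ≤ f x := by
  by_cases hx : IsMax x
  · rw [Mup_max hx]; exact (hf.1 x).1
  · rw [Mup_not_max hx]
    apply csSup_le ((Set.Nonempty.image _) (exists_covBy_of_wellFoundedLT hx))
    rintro _ ⟨y, hy, rfl⟩
    have hy' : x ⋖ y := hy
    exact hf.2 hy'.le

lemma le_Mup_of_lt {f : P → ℝ} (hf : InORPolytope P f) {x z : P} (hxz : x < z) :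
    f z ≤ sSup {v : ℝ | ∃ y : PHat P, toHat x ⋖ y ∧ v = hatOR f y} := by
  have hx : ¬ IsMax x := fun h => hxz.not_ge (h hxz.le)
  obtain ⟨w, hxw, hwz⟩ := exists_covBy_le_of_lt hxz
  rw [Mup_not_max hx]
  exact (hf.2 hwz).trans
    (le_csSup ((Set.toFinite {y : P | x ⋖ y}).image _).bddAbove (Set.mem_image_of_mem _ hxw))

lemma ORinv_chain_bound {f : P → ℝ} (hf : InORPolytope P f) :
    ∀ l : List P, l.Chain' (· < ·) → ∀ x ∈ l.head?, (l.map (ORinv f)).sum ≤ f x := by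
  intro l
  induction l with
  | nil => intro _ x hx; simp at hx
  | cons a t IH =>
    intro hc x hx
    obtain rfl : x = a := (by simpa using hx : a = x).symm
    rw [List.Chain', List.isChain_cons] at hc
    cases t with
    | nil =>
      simp only [List.map_cons, List.map_nil, List.sum_cons, List.sum_nil, add_zero]
      have := Mup_nonneg hf x
      rw [ORinv]; linarith
    | cons b t' =>
      have hab : x < b := hc.1 b rfl
      have h1 := IH hc.2 b rfl
      have h2 := le_Mup_of_lt hf hab
      simp only [List.map_cons, List.sum_cons] at h1 ⊢
      rw [ORinv]
      linarith

lemma ORinv_mem_chainPolytope {f : P → ℝ} (hf : InORPolytope P f) :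
    InChainPolytope P (ORinv f) := by
  constructor
  · intro x
    have := Mup_le_self hf x
    rw [ORinv]; linarith
  · intro l hl
    cases l with
    | nil => simp
    | cons a t =>
      have h1 := ORinv_chain_bound hf (a :: t) hl a rfl
      exact h1.trans (hf.1 a).2

lemma ORmap_mem_ORPolytope {g : P → ℝ} (hg : InChainPolytope P g) :
    InORPolytope P (ORmap g) :=
  ⟨fun x => ⟨ORmap_nonneg hg x, ORmap_le_one hg x⟩, ORmap_anti hg⟩

end ORside

section Dual
open OrderDual

lemma chain'_covBy_reverse_dual {l : List P} :
    (l.reverse.map (toDual : P → Pᵒᵈ)).Chain' (· ⋖ ·) ↔ l.Chain' (· ⋖ ·) := by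
  rw [List.Chain', List.Chain', List.isChain_map, List.isChain_reverse]
  constructor
  · exact fun h => h.imp fun a b hab => toDual_covBy_toDual_iff.mp hab
  · exact fun h => h.imp fun a b hab => toDual_covBy_toDual_iff.mpr hab

lemma mem_maxChainsTo_dual (x : P) (l : List P) :
    l ∈ maxChainsTo x ↔
      l.reverse.map (toDual : P → Pᵒᵈ) ∈ maxChainsFrom (P := Pᵒᵈ) (toDual x) := by
  constructor
  · rintro ⟨hc, ⟨a, ha, hamin⟩, hl⟩
    refine ⟨chain'_covBy_reverse_dual.mpr hc, ?_, toDual a, ?_, ?_⟩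
    · rw [List.head?_map, List.head?_reverse, hl]; rfl
    · rw [List.getLast?_map, List.getLast?_reverse, ha]; rfl
    · exact isMax_toDual_iff.mpr hamin
  · rintro ⟨hc, hh, z, hz, hzm⟩
    rw [List.head?_map, List.head?_reverse] at hh
    rw [List.getLast?_map, List.getLast?_reverse] at hz
    obtain ⟨a, ha, hta⟩ := Option.map_eq_some_iff.mp hz
    refine ⟨chain'_covBy_reverse_dual.mp hc, ⟨a, ha, ?_⟩, ?_⟩
    · have : IsMax (toDual a) := hta ▸ hzm
      exact isMax_toDual_iff.mp this
    · obtain ⟨b, hb, htb⟩ := Option.map_eq_some_iff.mp hh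
      have hbx : b = x := OrderDual.toDual.injective htb
      rwa [hbx] at hb

lemma sum_reverse_dual (g : P → ℝ) (l : List P) :
    ((l.reverse.map (toDual : P → Pᵒᵈ)).map (fun y => g (ofDual y))).sum
      = (l.map g).sum := by
  rw [List.map_map, List.map_reverse, List.sum_reverse]
  rfl

lemma OPmap_eq_dual (g : P → ℝ) (x : P) :
    OPmap g x = ORmap (P := Pᵒᵈ) (fun y => g (ofDual y)) (toDual x) := by
  unfold OPmap ORmap
  congr 1
  ext v
  constructor
  · rintro ⟨l, hl, rfl⟩
    exact ⟨l.reverse.map toDual, (mem_maxChainsTo_dual x l).mp hl, sum_reverse_dual g l⟩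
  · rintro ⟨m, hm, rfl⟩
    have hrm : ((m.map (ofDual : Pᵒᵈ → P)).reverse).reverse.map (toDual : P → Pᵒᵈ) = m := by
      rw [List.reverse_reverse, List.map_map]
      exact List.map_id'' (fun a => rfl) m
    refine ⟨(m.map (ofDual : Pᵒᵈ → P)).reverse,
      (mem_maxChainsTo_dual x _).mpr (by rw [hrm]; exact hm), ?_⟩
    show (((m.map (ofDual : Pᵒᵈ → P)).reverse).map g).sum
        = (m.map (fun y => g (ofDual y))).sum
    rw [List.map_reverse, List.sum_reverse, List.map_map]
    rfl

lemma OPinv_eq_dual (f : P → ℝ) (x : P) :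
    OPinv f x = ORinv (P := Pᵒᵈ) (fun y => f (ofDual y)) (toDual x) := by
  have hset : {v : ℝ | ∃ y : PHat P, y ⋖ toHat x ∧ v = hatOP f y}
      = {v : ℝ | ∃ y : PHat Pᵒᵈ, toHat (toDual x) ⋖ y ∧
          v = hatOR (fun y => f (ofDual y)) y} := by
    rw [downSet_eq, upSet_eq (P := Pᵒᵈ)]
    by_cases hx : IsMin x
    · rw [if_pos hx, if_pos (isMax_toDual_iff.mpr hx)]
    · rw [if_neg hx, if_neg (fun h => hx (isMax_toDual_iff.mp h))]
      ext v
      constructor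
      · rintro ⟨y, hy, rfl⟩
        have hy' : y ⋖ x := hy
        exact ⟨toDual y, toDual_covBy_toDual_iff.mpr hy', rfl⟩
      · rintro ⟨w, hw, rfl⟩
        have hw' : (toDual x : Pᵒᵈ) ⋖ toDual (ofDual w) := hw
        exact ⟨ofDual w, toDual_covBy_toDual_iff.mp hw', rfl⟩
  unfold OPinv ORinv
  rw [hset]
  rfl

lemma chain_dual_of {g : P → ℝ} (hg : InChainPolytope P g) :
    InChainPolytope Pᵒᵈ (fun y => g (ofDual y)) := by
  refine ⟨fun x => hg.1 _, fun l hl => ?_⟩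
  have h2 : ((l.map (ofDual : Pᵒᵈ → P)).reverse).Chain' (· < ·) := by
    rw [List.Chain', List.isChain_reverse, List.isChain_map]
    exact hl
  have h3 := hg.2 _ h2
  rw [List.map_reverse, List.sum_reverse, List.map_map] at h3
  exact h3

lemma chain_of_dual {g : P → ℝ} (hg : InChainPolytope Pᵒᵈ (fun y => g (ofDual y))) :
    InChainPolytope P g := by
  refine ⟨fun x => hg.1 (toDual x), fun l hl => ?_⟩
  have h2 : ((l.map (toDual : P → Pᵒᵈ)).reverse).Chain' (· < ·) := by
    rw [List.Chain', List.isChain_reverse, List.isChain_map]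
    exact hl
  have h3 := hg.2 _ h2
  rw [List.map_reverse, List.sum_reverse, List.map_map] at h3
  exact h3

lemma OP_dual_iff {f : P → ℝ} :
    InOPPolytope P f ↔ InORPolytope Pᵒᵈ (fun y => f (ofDual y)) := by
  constructor
  · rintro ⟨hb, hm⟩
    exact ⟨fun x => hb _, fun x y hxy => hm (show (ofDual y : P) ≤ ofDual x from hxy)⟩
  · rintro ⟨hb, hm⟩
    exact ⟨fun x => hb (toDual x),
      fun x y hxy => hm (show (toDual y : Pᵒᵈ) ≤ toDual x from hxy)⟩

end Dual

/-- The transfer maps `OR : C(P) → OR(P)` and `OP : C(P) → OP(P)` are bijections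
between the chain polytope and the order-reversing (resp. order-preserving) polytope,
with inverses `OR⁻¹` and `OP⁻¹` as given. -/
theorem transfer_maps_are_bijections (P : Type*) [PartialOrder P] [Fintype P] :
    ((∀ g : P → ℝ, InChainPolytope P g → InORPolytope P (ORmap g)) ∧
     (∀ f : P → ℝ, InORPolytope P f → InChainPolytope P (ORinv f)) ∧
     (∀ g : P → ℝ, InChainPolytope P g → ORinv (ORmap g) = g) ∧
     (∀ f : P → ℝ, InORPolytope P f → ORmap (ORinv f) = f)) ∧
    ((∀ g : P → ℝ, InChainPolytope P g → InOPPolytope P (OPmap g)) ∧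
     (∀ f : P → ℝ, InOPPolytope P f → InChainPolytope P (OPinv f)) ∧
     (∀ g : P → ℝ, InChainPolytope P g → OPinv (OPmap g) = g) ∧
     (∀ f : P → ℝ, InOPPolytope P f → OPmap (OPinv f) = f)) := by
  constructor
  · exact ⟨fun g hg => ORmap_mem_ORPolytope hg,
      fun f hf => ORinv_mem_chainPolytope hf,
      fun g hg => ORinv_ORmap hg,
      fun f hf => ORmap_ORinv hf⟩
  · refine ⟨?_, ?_, ?_, ?_⟩
    · intro g hg
      apply OP_dual_iff.mpr
      have h1 : (fun y : Pᵒᵈ => OPmap g (OrderDual.ofDual y))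
          = ORmap (P := Pᵒᵈ) (fun y => g (OrderDual.ofDual y)) :=
        funext fun y => OPmap_eq_dual g (OrderDual.ofDual y)
      rw [h1]
      exact ORmap_mem_ORPolytope (chain_dual_of hg)
    · intro f hf
      apply chain_of_dual
      have h1 : (fun y : Pᵒᵈ => OPinv f (OrderDual.ofDual y))
          = ORinv (P := Pᵒᵈ) (fun y => f (OrderDual.ofDual y)) :=
        funext fun y => OPinv_eq_dual f (OrderDual.ofDual y)
      rw [h1]
      exact ORinv_mem_chainPolytope (OP_dual_iff.mp hf)
    · intro g hg
      funext x
      rw [OPinv_eq_dual (OPmap g) x]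
      have h1 : (fun y : Pᵒᵈ => OPmap g (OrderDual.ofDual y))
          = ORmap (P := Pᵒᵈ) (fun y => g (OrderDual.ofDual y)) :=
        funext fun y => OPmap_eq_dual g (OrderDual.ofDual y)
      rw [h1, ORinv_ORmap (chain_dual_of hg)]
      rfl
    · intro f hf
      funext x
      rw [OPmap_eq_dual (OPinv f) x]
      have h1 : (fun y : Pᵒᵈ => OPinv f (OrderDual.ofDual y))
          = ORinv (P := Pᵒᵈ) (fun y => f (OrderDual.ofDual y)) :=
        funext fun y => OPinv_eq_dual f (OrderDual.ofDual y)
      rw [h1, ORmap_ORinv (OP_dual_iff.mp hf)]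
      rfl
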